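/- arXiv:1812.02491 — 3 statements merged into one kernel-verified Lean document; each statement's English description precedes it below -/
import Mathlib

section
/- Let n ≥ 3 and let ω¹, ω², ω³ ∈ Rₙⁿ be integrable formal 1-forms that are pairwise independent (for each i ≠ j there are indices p, q with ωⁱ_p·ωʲ_q ≠ ωⁱ_q·ωʲ_p) and such that for each i the coefficients ωⁱ₁,…,ωⁱₙ have no common non-unit divisor in Rₙ. Suppose there exist u, v ∈ Kₙⁿ such that the 2-form η := u ∧ v is nonzero in the exterior algebra of the Kₙ-vector space Kₙⁿ and η ∧ ω̄ⁱ = 0 for i = 1,2,3, where ω̄ⁱ denotes the image of ωⁱ in Kₙⁿ. Then there exist nonzero g₁, g₂, g₃ ∈ Rₙ such that g₃·ω³ = g₁·ω¹ + g₂·ω² componentwise, for every s, t ∈ ℂ the 1-form s·g₁·ω¹ + t·g₂·ω² is integrable, and η is a Kₙ-scalar multiple of ω̄¹ ∧ ω̄². -/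
open ExteriorAlgebra MvPowerSeries

set_option synthInstance.maxHeartbeats 1000000
set_option maxHeartbeats 2000000

instance (n : ℕ) : IsDomain (MvPowerSeries (Fin n) ℂ) := NoZeroDivisors.to_isDomain _

/-- `Kₙ`, the fraction field of `ℂ⟦x₁,…,xₙ⟧`: germs of formal meromorphic
functions. -/
abbrev Kn (n : ℕ) := FractionRing (MvPowerSeries (Fin n) ℂ)

/-- Formal partial derivative `∂ᵢ` on multivariate formal power series. -/
noncomputable def pd {n : ℕ} (i : Fin n) (f : MvPowerSeries (Fin n) ℂ) :
    MvPowerSeries (Fin n) ℂ :=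
  fun m => ((m i : ℂ) + 1) * MvPowerSeries.coeff (m + Finsupp.single i 1) f

/-- A formal 1-form `ω = Σᵢ ωᵢ dxᵢ` on `(ℂⁿ,0)` is integrable (`ω ∧ dω = 0`). -/
def IntegrableN {n : ℕ} (ω : Fin n → MvPowerSeries (Fin n) ℂ) : Prop :=
  ∀ i j k : Fin n, i < j → j < k →
    ω i * (pd j (ω k) - pd k (ω j)) - ω j * (pd i (ω k) - pd k (ω i))
      + ω k * (pd i (ω j) - pd j (ω i)) = 0

/-- The image of a formal 1-form in the space of meromorphic 1-forms. -/
noncomputable def toMero {n : ℕ} (ω : Fin n → MvPowerSeries (Fin n) ℂ) :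
    Fin n → Kn n :=
  fun p => algebraMap (MvPowerSeries (Fin n) ℂ) (Kn n) (ω p)

/-! ### Auxiliary lemmas: exterior algebra over a field -/

section Exterior

variable {K V : Type*} [Field K] [AddCommGroup V] [Module K V]

theorem iMulti3 (u v w : V) : ιMulti K 3 ![u, v, w] = ι K u * ι K v * ι K w := by
  simp [ιMulti_apply, List.ofFn_succ, mul_assoc]

theorem prod3_ne_zero {f : Fin 3 → V} (hf : LinearIndependent K f) :
    ι K (f 0) * ι K (f 1) * ι K (f 2) ≠ 0 := by
  classical
  have hs : LinearIndepOn K id (Set.range f) := (linearIndepOn_id_range_iff hf.injective).mpr hf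
  let b : Module.Basis _ K V := Module.Basis.extend hs
  have hmem : ∀ i : Fin 3, f i ∈ hs.extend (Set.subset_univ _) := fun i =>
    hs.subset_extend _ ⟨i, rfl⟩
  let φ : Fin 3 → (V →ₗ[K] K) := fun i => b.coord ⟨f i, hmem i⟩
  have hφ : ∀ i j, φ i (f j) = if j = i then 1 else 0 := by
    intro i j
    have : f j = b ⟨f j, hmem j⟩ := by simp [b, Module.Basis.coe_extend]
    rw [this]
    simp only [φ, Module.Basis.coord_apply, Module.Basis.repr_self]
    rw [Finsupp.single_apply]
    simp [Subtype.ext_iff, hf.injective.eq_iff]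
  let G : V [⋀^Fin 3]→ₗ[K] K :=
    Matrix.detRowAlternating.compLinearMap (LinearMap.pi fun j => φ j)
  have hG : G f = 1 := by
    have h1 : (fun i => (LinearMap.pi fun j => φ j) (f i)) = (1 : Matrix (Fin 3) (Fin 3) K) := by
      funext i j
      simp [LinearMap.pi_apply, hφ, Matrix.one_apply, eq_comm]
    simp only [G, AlternatingMap.compLinearMap_apply]
    rw [h1]
    exact Matrix.det_one
  let F : ∀ i, V [⋀^Fin i]→ₗ[K] K := fun i => match i with | 3 => G | _ => 0
  intro h
  have h2 : ιMulti K 3 f = 0 := by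
    rw [show f = ![f 0, f 1, f 2] by funext i; fin_cases i <;> rfl, iMulti3, h]
  have h3 := congrArg (liftAlternating F) h2
  rw [liftAlternating_apply_ιMulti, map_zero] at h3
  have : G f = 0 := h3
  rw [hG] at this
  exact one_ne_zero this

theorem pair_li {u v : V} (h : ι K u * ι K v ≠ 0) : LinearIndependent K ![u, v] := by
  rw [LinearIndependent.pair_iff]
  intro s t hst
  by_contra hc
  rw [not_and_or] at hc
  rcases hc with hs | ht
  · have h2 := congrArg (fun x => s⁻¹ • x) hst
    simp only [smul_add, smul_smul, smul_zero] at h2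
    rw [inv_mul_cancel₀ hs, one_smul] at h2
    have hu : u = -((s⁻¹ * t) • v) := eq_neg_of_add_eq_zero_left h2
    apply h
    rw [hu, map_neg, map_smul, neg_mul, smul_mul_assoc, ι_sq_zero, smul_zero, neg_zero]
  · have h2 := congrArg (fun x => t⁻¹ • x) hst
    simp only [smul_add, smul_smul, smul_zero] at h2
    rw [inv_mul_cancel₀ ht, one_smul] at h2
    have hv : v = -((t⁻¹ * s) • u) := eq_neg_of_add_eq_zero_right h2
    apply h
    rw [hv, map_neg, map_smul, mul_neg, mul_smul_comm, ι_sq_zero, smul_zero, neg_zero]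

theorem mem_span_of_prod {u v w : V} (hη : ι K u * ι K v ≠ 0)
    (h : ι K u * ι K v * ι K w = 0) : w ∈ Submodule.span K {u, v} := by
  by_contra hw
  have hli2 : LinearIndependent K ![u, v] := pair_li hη
  have hli3 : LinearIndependent K ![u, v, w] := by
    have : ![u, v, w] = Fin.snoc ![u, v] w := by
      funext i; fin_cases i <;> simp [Fin.snoc] <;> rfl
    rw [this, linearIndependent_fin_snoc]
    refine ⟨hli2, ?_⟩
    rwa [show Set.range ![u, v] = {u, v} by simp [Matrix.range_cons, Set.pair_comm]]
  exact prod3_ne_zero hli3 (by simpa using h)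

end Exterior

/-! ### Auxiliary lemmas: calculus of `pd` -/

lemma coeff_pd {n : ℕ} (i : Fin n) (f : MvPowerSeries (Fin n) ℂ) (m : Fin n →₀ ℕ) :
    MvPowerSeries.coeff m (pd i f)
      = ((m i : ℂ) + 1) * MvPowerSeries.coeff (m + Finsupp.single i 1) f := rfl

lemma pd_shift {n : ℕ} (i : Fin n) (f g : MvPowerSeries (Fin n) ℂ) (m : Fin n →₀ ℕ) :
    ∑ p ∈ Finset.HasAntidiagonal.antidiagonal m,
      (((p.1 i : ℂ) + 1) * MvPowerSeries.coeff (p.1 + Finsupp.single i 1) f)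
        * MvPowerSeries.coeff p.2 g
    = ∑ p ∈ Finset.HasAntidiagonal.antidiagonal (m + Finsupp.single i 1),
        (((p.1 : Fin n →₀ ℕ) i : ℂ)) * (MvPowerSeries.coeff p.1 f
          * MvPowerSeries.coeff p.2 g) := by
  classical
  rw [show (∑ p ∈ Finset.HasAntidiagonal.antidiagonal (m + Finsupp.single i 1),
        (((p.1 : Fin n →₀ ℕ) i : ℂ)) * (MvPowerSeries.coeff p.1 f
          * MvPowerSeries.coeff p.2 g))
      = ∑ p ∈ (Finset.HasAntidiagonal.antidiagonal (m + Finsupp.single i 1)).filter (fun p => p.1 i ≠ 0),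
        (((p.1 : Fin n →₀ ℕ) i : ℂ)) * (MvPowerSeries.coeff p.1 f
          * MvPowerSeries.coeff p.2 g) from
    (Finset.sum_filter_of_ne (fun x _ h => by
      by_contra hne
      exact h (by rw [hne]; push_cast; ring))).symm]
  refine Finset.sum_nbij' (i := fun p => (p.1 + Finsupp.single i 1, p.2))
    (j := fun q => (q.1 - Finsupp.single i 1, q.2)) ?_ ?_ ?_ ?_ ?_
  · intro a ha
    rw [Finset.HasAntidiagonal.mem_antidiagonal] at ha
    rw [Finset.mem_filter, Finset.HasAntidiagonal.mem_antidiagonal]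
    refine ⟨by rw [add_right_comm, ha], ?_⟩
    simp [Finsupp.add_apply, Finsupp.single_eq_same]
  · intro b hb
    rw [Finset.mem_filter, Finset.HasAntidiagonal.mem_antidiagonal] at hb
    obtain ⟨hb1, hb2⟩ := hb
    rw [Finset.HasAntidiagonal.mem_antidiagonal]
    have hle : Finsupp.single i 1 ≤ b.1 := by
      rw [Finsupp.single_le_iff]; omega
    have h3 : b.1 - Finsupp.single i 1 + Finsupp.single i 1 = b.1 := tsub_add_cancel_of_le hle
    apply add_right_cancel (b := Finsupp.single i 1)
    rw [add_right_comm, h3, hb1]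
  · intro a _
    simp
  · intro b hb
    rw [Finset.mem_filter, Finset.HasAntidiagonal.mem_antidiagonal] at hb
    have hle : Finsupp.single i 1 ≤ b.1 := by
      rw [Finsupp.single_le_iff]; omega
    simp [tsub_add_cancel_of_le hle]
  · intro a _
    simp only [Finsupp.add_apply, Finsupp.single_eq_same]
    push_cast
    ring

lemma pd_shift' {n : ℕ} (i : Fin n) (f g : MvPowerSeries (Fin n) ℂ) (m : Fin n →₀ ℕ) :
    ∑ p ∈ Finset.HasAntidiagonal.antidiagonal m,
      MvPowerSeries.coeff p.1 f *
        (((p.2 i : ℂ) + 1) * MvPowerSeries.coeff (p.2 + Finsupp.single i 1) g)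
    = ∑ p ∈ Finset.HasAntidiagonal.antidiagonal (m + Finsupp.single i 1),
        (((p.2 : Fin n →₀ ℕ) i : ℂ)) * (MvPowerSeries.coeff p.1 f
          * MvPowerSeries.coeff p.2 g) := by
  classical
  rw [show (∑ p ∈ Finset.HasAntidiagonal.antidiagonal (m + Finsupp.single i 1),
        (((p.2 : Fin n →₀ ℕ) i : ℂ)) * (MvPowerSeries.coeff p.1 f
          * MvPowerSeries.coeff p.2 g))
      = ∑ p ∈ (Finset.HasAntidiagonal.antidiagonal (m + Finsupp.single i 1)).filter (fun p => p.2 i ≠ 0),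
        (((p.2 : Fin n →₀ ℕ) i : ℂ)) * (MvPowerSeries.coeff p.1 f
          * MvPowerSeries.coeff p.2 g) from
    (Finset.sum_filter_of_ne (fun x _ h => by
      by_contra hne
      exact h (by rw [hne]; push_cast; ring))).symm]
  refine Finset.sum_nbij' (i := fun p => (p.1, p.2 + Finsupp.single i 1))
    (j := fun q => (q.1, q.2 - Finsupp.single i 1)) ?_ ?_ ?_ ?_ ?_
  · intro a ha
    rw [Finset.HasAntidiagonal.mem_antidiagonal] at ha
    rw [Finset.mem_filter, Finset.HasAntidiagonal.mem_antidiagonal]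
    refine ⟨by rw [← add_assoc, ha], ?_⟩
    simp [Finsupp.add_apply, Finsupp.single_eq_same]
  · intro b hb
    rw [Finset.mem_filter, Finset.HasAntidiagonal.mem_antidiagonal] at hb
    obtain ⟨hb1, hb2⟩ := hb
    rw [Finset.HasAntidiagonal.mem_antidiagonal]
    have hle : Finsupp.single i 1 ≤ b.2 := by
      rw [Finsupp.single_le_iff]; omega
    have h3 : b.2 - Finsupp.single i 1 + Finsupp.single i 1 = b.2 := tsub_add_cancel_of_le hle
    apply add_right_cancel (b := Finsupp.single i 1)
    rw [add_assoc, h3, hb1]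
  · intro a _
    simp
  · intro b hb
    rw [Finset.mem_filter, Finset.HasAntidiagonal.mem_antidiagonal] at hb
    have hle : Finsupp.single i 1 ≤ b.2 := by
      rw [Finsupp.single_le_iff]; omega
    simp [tsub_add_cancel_of_le hle]
  · intro a _
    simp only [Finsupp.add_apply, Finsupp.single_eq_same]
    push_cast
    ring

lemma pd_mul {n : ℕ} (i : Fin n) (f g : MvPowerSeries (Fin n) ℂ) :
    pd i (f * g) = pd i f * g + f * pd i g := by
  ext m
  rw [map_add, coeff_pd, MvPowerSeries.coeff_mul, MvPowerSeries.coeff_mul,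
    MvPowerSeries.coeff_mul, Finset.mul_sum]
  simp only [coeff_pd]
  rw [pd_shift i f g m, pd_shift' i f g m, ← Finset.sum_add_distrib]
  apply Finset.sum_congr rfl
  intro p hp
  rw [Finset.HasAntidiagonal.mem_antidiagonal] at hp
  have h4 : (p.1 i : ℂ) + (p.2 i : ℂ) = (m i : ℂ) + 1 := by
    have h5 := congrArg (fun x => x i) hp
    simp only [Finsupp.coe_add, Pi.add_apply, Finsupp.single_eq_same] at h5
    exact_mod_cast h5
  rw [← h4]
  ring

lemma pd_add {n : ℕ} (i : Fin n) (f g : MvPowerSeries (Fin n) ℂ) :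
    pd i (f + g) = pd i f + pd i g := by
  ext m
  rw [map_add, coeff_pd, coeff_pd, coeff_pd, map_add]
  ring

lemma pd_C {n : ℕ} (i : Fin n) (s : ℂ) : pd i ((C : ℂ →+* MvPowerSeries (Fin n) ℂ) s) = 0 := by
  ext m
  rw [coeff_pd, MvPowerSeries.coeff_C]
  rw [if_neg, map_zero, mul_zero]
  intro h
  have := congrArg (fun x => x i) h
  simp [Finsupp.single_eq_same] at this

lemma pd_C_mul {n : ℕ} (i : Fin n) (s : ℂ) (f : MvPowerSeries (Fin n) ℂ) :
    pd i ((C : ℂ →+* MvPowerSeries (Fin n) ℂ) s * f) = (C : ℂ →+* MvPowerSeries (Fin n) ℂ) s * pd i f := by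
  rw [pd_mul, pd_C, zero_mul, zero_add]

lemma integrable_smul {n : ℕ} (g : MvPowerSeries (Fin n) ℂ)
    (ω : Fin n → MvPowerSeries (Fin n) ℂ) (h : IntegrableN ω) :
    IntegrableN (fun p => g * ω p) := by
  intro i j k hij hjk
  have e := h i j k hij hjk
  simp only [pd_mul]
  linear_combination (g * g) * e

lemma integrable_pencil {n : ℕ} (α β : Fin n → MvPowerSeries (Fin n) ℂ)
    (hα : IntegrableN α) (hβ : IntegrableN β)
    (hs : IntegrableN (fun p => α p + β p)) (s t : ℂ) :
    IntegrableN (fun p => (C : ℂ →+* MvPowerSeries (Fin n) ℂ) s * α p + (C : ℂ →+* MvPowerSeries (Fin n) ℂ) t * β p) := by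
  intro i j k hij hjk
  have e1 := hα i j k hij hjk
  have e2 := hβ i j k hij hjk
  have e3 := hs i j k hij hjk
  simp only [pd_add] at e3
  simp only [pd_add, pd_C_mul]
  linear_combination ((C : ℂ →+* MvPowerSeries (Fin n) ℂ) s * (C : ℂ →+* MvPowerSeries (Fin n) ℂ) s - (C : ℂ →+* MvPowerSeries (Fin n) ℂ) s * (C : ℂ →+* MvPowerSeries (Fin n) ℂ) t) * e1
    + ((C : ℂ →+* MvPowerSeries (Fin n) ℂ) t * (C : ℂ →+* MvPowerSeries (Fin n) ℂ) t - (C : ℂ →+* MvPowerSeries (Fin n) ℂ) s * (C : ℂ →+* MvPowerSeries (Fin n) ℂ) t) * e2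
    + ((C : ℂ →+* MvPowerSeries (Fin n) ℂ) s * (C : ℂ →+* MvPowerSeries (Fin n) ℂ) t) * e3

/-- A codimension-two distribution (a nonzero decomposable meromorphic 2-form `η`)
tangent to three pairwise independent integrable 1-forms is the axis of a pencil of
integrable 1-forms containing them. -/
theorem tangent_to_three_integrable_forms_gives_pencil (n : ℕ) (hn : 3 ≤ n)
    (ω₁ ω₂ ω₃ : Fin n → MvPowerSeries (Fin n) ℂ)
    (hi₁ : IntegrableN ω₁) (hi₂ : IntegrableN ω₂) (hi₃ : IntegrableN ω₃)
    (h12 : ∃ p q : Fin n, ω₁ p * ω₂ q ≠ ω₁ q * ω₂ p)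
    (h13 : ∃ p q : Fin n, ω₁ p * ω₃ q ≠ ω₁ q * ω₃ p)
    (h23 : ∃ p q : Fin n, ω₂ p * ω₃ q ≠ ω₂ q * ω₃ p)
    (hcop₁ : ∀ d : MvPowerSeries (Fin n) ℂ, (∀ p, d ∣ ω₁ p) → IsUnit d)
    (hcop₂ : ∀ d : MvPowerSeries (Fin n) ℂ, (∀ p, d ∣ ω₂ p) → IsUnit d)
    (hcop₃ : ∀ d : MvPowerSeries (Fin n) ℂ, (∀ p, d ∣ ω₃ p) → IsUnit d)
    (u v : Fin n → Kn n)
    (hη : ι (Kn n) u * ι (Kn n) v ≠ 0)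
    (ht₁ : ι (Kn n) u * ι (Kn n) v * ι (Kn n) (toMero ω₁) = 0)
    (ht₂ : ι (Kn n) u * ι (Kn n) v * ι (Kn n) (toMero ω₂) = 0)
    (ht₃ : ι (Kn n) u * ι (Kn n) v * ι (Kn n) (toMero ω₃) = 0) :
    ∃ g₁ g₂ g₃ : MvPowerSeries (Fin n) ℂ, g₁ ≠ 0 ∧ g₂ ≠ 0 ∧ g₃ ≠ 0 ∧
      (∀ p : Fin n, g₃ * ω₃ p = g₁ * ω₁ p + g₂ * ω₂ p) ∧
      (∀ s t : ℂ,
        IntegrableN (fun p => (C : ℂ →+* MvPowerSeries (Fin n) ℂ) s * (g₁ * ω₁ p) + (C : ℂ →+* MvPowerSeries (Fin n) ℂ) t * (g₂ * ω₂ p))) ∧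
      (∃ c : Kn n, ι (Kn n) u * ι (Kn n) v
          = c • (ι (Kn n) (toMero ω₁) * ι (Kn n) (toMero ω₂))) := by
  classical
  have hAinj : Function.Injective (algebraMap (MvPowerSeries (Fin n) ℂ) (Kn n)) :=
    IsFractionRing.injective (MvPowerSeries (Fin n) ℂ) (Kn n)
  obtain ⟨a₁, b₁, h₁⟩ := Submodule.mem_span_pair.mp (mem_span_of_prod hη ht₁)
  obtain ⟨a₂, b₂, h₂⟩ := Submodule.mem_span_pair.mp (mem_span_of_prod hη ht₂)
  obtain ⟨a₃, b₃, h₃⟩ := Submodule.mem_span_pair.mp (mem_span_of_prod hη ht₃)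
  have hw₁ : ∀ p, toMero ω₁ p = a₁ * u p + b₁ * v p := fun p => by
    rw [← h₁]; simp
  have hw₂ : ∀ p, toMero ω₂ p = a₂ * u p + b₂ * v p := fun p => by
    rw [← h₂]; simp
  have hw₃ : ∀ p, toMero ω₃ p = a₃ * u p + b₃ * v p := fun p => by
    rw [← h₃]; simp
  -- transfer the independence hypotheses to `Kn n`
  have hKtrans : ∀ (σ τ : Fin n → MvPowerSeries (Fin n) ℂ),
      (∃ p q, σ p * τ q ≠ σ q * τ p) →
      ∃ p q, toMero σ p * toMero τ q ≠ toMero σ q * toMero τ p := by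
    intro σ τ ⟨p, q, h⟩
    exact ⟨p, q, fun hc => h (hAinj (by rw [map_mul, map_mul]; exact hc))⟩
  have hK12 := hKtrans ω₁ ω₂ h12
  have hK13 := hKtrans ω₁ ω₃ h13
  have hK23 := hKtrans ω₂ ω₃ h23
  -- the determinant of the coefficients of ω₁, ω₂ is nonzero
  have hdet : a₁ * b₂ - a₂ * b₁ ≠ 0 := by
    intro hd
    obtain ⟨p, q, h⟩ := hK12
    apply h
    rw [hw₁ p, hw₁ q, hw₂ p, hw₂ q]
    linear_combination (u p * v q - u q * v p) * hd
  -- solve for ω₃ in terms of ω₁, ω₂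
  have hw₃' : ∀ p, toMero ω₃ p
      = ((a₃ * b₂ - a₂ * b₃) / (a₁ * b₂ - a₂ * b₁)) * toMero ω₁ p
        + ((a₁ * b₃ - a₃ * b₁) / (a₁ * b₂ - a₂ * b₁)) * toMero ω₂ p := by
    intro p
    rw [hw₁ p, hw₂ p, hw₃ p]
    rw [div_mul_eq_mul_div, div_mul_eq_mul_div, ← add_div, eq_div_iff hdet]
    ring
  have hAqne : (a₃ * b₂ - a₂ * b₃) / (a₁ * b₂ - a₂ * b₁) ≠ 0 := by
    intro h0
    obtain ⟨p, q, h⟩ := hK23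
    apply h
    rw [hw₃' p, hw₃' q, h0]
    ring
  have hBqne : (a₁ * b₃ - a₃ * b₁) / (a₁ * b₂ - a₂ * b₁) ≠ 0 := by
    intro h0
    obtain ⟨p, q, h⟩ := hK13
    apply h
    rw [hw₃' p, hw₃' q, h0]
    ring
  -- clear denominators
  obtain ⟨r₁, d₁, hd₁mem, hAq⟩ :=
    IsFractionRing.div_surjective (A := MvPowerSeries (Fin n) ℂ)
      ((a₃ * b₂ - a₂ * b₃) / (a₁ * b₂ - a₂ * b₁))
  obtain ⟨r₂, d₂, hd₂mem, hBq⟩ :=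
    IsFractionRing.div_surjective (A := MvPowerSeries (Fin n) ℂ)
      ((a₁ * b₃ - a₃ * b₁) / (a₁ * b₂ - a₂ * b₁))
  have hd₁ : d₁ ≠ 0 := nonZeroDivisors.ne_zero hd₁mem
  have hd₂ : d₂ ≠ 0 := nonZeroDivisors.ne_zero hd₂mem
  have hAd₁ : algebraMap (MvPowerSeries (Fin n) ℂ) (Kn n) d₁ ≠ 0 :=
    fun h => hd₁ (hAinj (by rw [h, map_zero]))
  have hAd₂ : algebraMap (MvPowerSeries (Fin n) ℂ) (Kn n) d₂ ≠ 0 :=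
    fun h => hd₂ (hAinj (by rw [h, map_zero]))
  have hr₁ : r₁ ≠ 0 := by
    intro h0
    apply hAqne
    rw [← hAq, h0, map_zero, zero_div]
  have hr₂ : r₂ ≠ 0 := by
    intro h0
    apply hBqne
    rw [← hBq, h0, map_zero, zero_div]
  have hid : ∀ p : Fin n, d₁ * d₂ * ω₃ p = r₁ * d₂ * ω₁ p + r₂ * d₁ * ω₂ p := by
    intro p
    apply hAinj
    have h5 : algebraMap (MvPowerSeries (Fin n) ℂ) (Kn n) (ω₃ p) = toMero ω₃ p := rfl
    have h6 : algebraMap (MvPowerSeries (Fin n) ℂ) (Kn n) (ω₁ p) = toMero ω₁ p := rfl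
    have h7 : algebraMap (MvPowerSeries (Fin n) ℂ) (Kn n) (ω₂ p) = toMero ω₂ p := rfl
    rw [map_add, map_mul, map_mul, map_mul, map_mul, map_mul, map_mul, h5, h6, h7,
      hw₃' p, ← hAq, ← hBq]
    field_simp
  refine ⟨r₁ * d₂, r₂ * d₁, d₁ * d₂, mul_ne_zero hr₁ hd₂, mul_ne_zero hr₂ hd₁,
    mul_ne_zero hd₁ hd₂, hid, ?_, ?_⟩
  · -- integrability of the pencil
    intro s t
    refine integrable_pencil (fun p => r₁ * d₂ * ω₁ p) (fun p => r₂ * d₁ * ω₂ p)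
      (integrable_smul _ ω₁ hi₁) (integrable_smul _ ω₂ hi₂) ?_ s t
    have hfun : (fun p => r₁ * d₂ * ω₁ p + r₂ * d₁ * ω₂ p)
        = fun p => d₁ * d₂ * ω₃ p := funext fun p => (hid p).symm
    show IntegrableN (fun p => r₁ * d₂ * ω₁ p + r₂ * d₁ * ω₂ p)
    rw [hfun]
    exact integrable_smul _ ω₃ hi₃
  · -- η is proportional to ω̄₁ ∧ ω̄₂
    have hswap : ι (Kn n) v * ι (Kn n) u = -(ι (Kn n) u * ι (Kn n) v) :=
      eq_neg_of_add_eq_zero_right (ι_add_mul_swap u v)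
    have hprod : ι (Kn n) (toMero ω₁) * ι (Kn n) (toMero ω₂)
        = (a₁ * b₂ - a₂ * b₁) • (ι (Kn n) u * ι (Kn n) v) := by
      rw [← h₁, ← h₂]
      simp only [map_add, map_smul, add_mul, mul_add, smul_mul_assoc, mul_smul_comm,
        ι_sq_zero, hswap, smul_zero, smul_neg, smul_smul, zero_add, add_zero]
      rw [sub_smul, mul_comm b₂ a₁, sub_eq_neg_add]
    exact ⟨(a₁ * b₂ - a₂ * b₁)⁻¹, by
      rw [hprod, smul_smul, inv_mul_cancel₀ hdet, one_smul]⟩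
end

section
/- Let n ≥ 1 and let ω, θ ∈ Rₙⁿ be formal 1-forms with holomorphic (formal power series) coefficients. Assume θ is closed, i.e., ∂ᵢθⱼ = ∂ⱼθᵢ for all i, j, and that dω = θ ∧ ω, i.e., ∂ᵢωⱼ − ∂ⱼωᵢ = θᵢωⱼ − θⱼωᵢ for all i, j. Then there exist f ∈ Rₙ and a unit u ∈ Rₙ such that ωᵢ = u·∂ᵢf for all i; that is, ω is a unit multiple of an exact form df, so the foliation defined by ω admits the holomorphic first integral f. -/
open MvPowerSeries

namespace FIaux
variable {n : ℕ}

def deg (m : Fin n →₀ ℕ) : ℕ := ∑ i, m i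

lemma coeff_pd (i : Fin n) (f : MvPowerSeries (Fin n) ℂ) (m : Fin n →₀ ℕ) :
    coeff m (pd i f) = ((m i : ℂ) + 1) * coeff (m + Finsupp.single i 1) f := rfl

lemma deg_add_single (m : Fin n →₀ ℕ) (i : Fin n) :
    deg (m + Finsupp.single i 1) = deg m + 1 := by
  simp [deg, Finsupp.add_apply, Finset.sum_add_distrib, Finsupp.single_apply,
    Finset.sum_ite_eq']

lemma deg_eq_zero_iff {m : Fin n →₀ ℕ} : deg m = 0 ↔ m = 0 := by
  simp [deg, Finset.sum_eq_zero_iff, Finsupp.ext_iff, funext_iff, DFunLike.ext_iff]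

lemma single_le_iff' {m : Fin n →₀ ℕ} {i : Fin n} : Finsupp.single i 1 ≤ m ↔ m i ≠ 0 := by
  rw [Finsupp.single_le_iff]; omega

lemma sub_add_single {m : Fin n →₀ ℕ} {i : Fin n} (h : m i ≠ 0) :
    m - Finsupp.single i 1 + Finsupp.single i 1 = m :=
  tsub_add_cancel_of_le (single_le_iff'.mpr h)

lemma deg_sub_single {m : Fin n →₀ ℕ} {i : Fin n} (h : m i ≠ 0) :
    deg (m - Finsupp.single i 1) + 1 = deg m := by
  conv_rhs => rw [← sub_add_single h, deg_add_single]

lemma deg_mono {p q : Fin n →₀ ℕ} (h : p ≤ q) : deg p ≤ deg q :=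
  Finset.sum_le_sum fun i _ => (Finsupp.le_def.mp h) i

lemma sub_single_apply {m : Fin n →₀ ℕ} {i j : Fin n} (hij : j ≠ i) :
    ((m - Finsupp.single i 1 : Fin n →₀ ℕ)) j = m j := by
  simp [Finsupp.tsub_apply, Finsupp.single_apply, Ne.symm hij]

lemma add_single_apply {m : Fin n →₀ ℕ} {i j : Fin n} (hij : j ≠ i) :
    ((m + Finsupp.single i 1 : Fin n →₀ ℕ)) j = m j := by
  simp [Finsupp.add_apply, Finsupp.single_apply, Ne.symm hij]

lemma sumWeights (m : Fin n →₀ ℕ) (i : Fin n) :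
    ∑ j : Fin n, (if j = i then ((m j : ℂ) + 1) else (m j : ℂ)) = (deg m : ℂ) + 1 := by
  have : ∀ j : Fin n, (if j = i then ((m j : ℂ) + 1) else (m j : ℂ))
      = (m j : ℂ) + (if j = i then 1 else 0) := by
    intro j; split <;> ring
  rw [Finset.sum_congr rfl fun j _ => this j, Finset.sum_add_distrib,
    Finset.sum_ite_eq' Finset.univ i (fun _ => (1:ℂ))]
  simp [deg]
lemma pd_mul (i : Fin n) (a b : MvPowerSeries (Fin n) ℂ) :
    pd i (a * b) = pd i a * b + a * pd i b := by
  classical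
  ext m
  set e := Finsupp.single i 1 with he
  have hei : e i = 1 := by simp [he]
  have key : ∀ c d : MvPowerSeries (Fin n) ℂ,
      ∑ p ∈ Finset.HasAntidiagonal.antidiagonal m, coeff p.1 (pd i c) * coeff p.2 d
      = ∑ p ∈ Finset.HasAntidiagonal.antidiagonal (m + e), (p.1 i : ℂ) * (coeff p.1 c * coeff p.2 d) := by
    intro c d
    rw [← Finset.sum_filter_of_ne (s := Finset.HasAntidiagonal.antidiagonal (m + e))
      (p := fun p : (Fin n →₀ ℕ) × (Fin n →₀ ℕ) => p.1 i ≠ 0) (fun x _ hx => by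
        intro h0; apply hx; rw [h0]; simp)]
    refine Finset.sum_bij' (fun p _ => (p.1 + e, p.2)) (fun p _ => (p.1 - e, p.2))
      ?_ ?_ ?_ ?_ ?_
    · intro p hp
      rw [Finset.HasAntidiagonal.mem_antidiagonal] at hp
      rw [Finset.mem_filter, Finset.HasAntidiagonal.mem_antidiagonal]
      refine ⟨?_, ?_⟩
      · show p.1 + e + p.2 = m + e
        rw [add_right_comm, hp]
      · show (p.1 + e) i ≠ 0
        simp [Finsupp.add_apply, hei]
    · intro p hp
      rw [Finset.mem_filter, Finset.HasAntidiagonal.mem_antidiagonal] at hp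
      rw [Finset.HasAntidiagonal.mem_antidiagonal]
      have hle : e ≤ p.1 := by rw [he, single_le_iff']; exact hp.2
      show p.1 - e + p.2 = m
      rw [tsub_add_eq_add_tsub hle, hp.1, add_tsub_cancel_right]
    · intro p hp
      show (p.1 + e - e, p.2) = p
      rw [add_tsub_cancel_right]
    · intro p hp
      rw [Finset.mem_filter, Finset.HasAntidiagonal.mem_antidiagonal] at hp
      have hle : e ≤ p.1 := by rw [he, single_le_iff']; exact hp.2
      show (p.1 - e + e, p.2) = p
      rw [tsub_add_cancel_of_le hle]
    · intro p hp
      show coeff p.1 (pd i c) * coeff p.2 d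
          = ((p.1 + e) i : ℂ) * (coeff (p.1 + e) c * coeff p.2 d)
      rw [coeff_pd]
      have h1 : ((p.1 + e) i : ℂ) = (p.1 i : ℂ) + 1 := by
        simp [Finsupp.add_apply, hei]
      rw [h1]; ring
  have keyL : ((m i : ℂ) + 1) * coeff (m + e) (a * b)
      = ∑ p ∈ Finset.HasAntidiagonal.antidiagonal (m + e),
          ((p.1 i : ℂ) + (p.2 i : ℂ)) * (coeff p.1 a * coeff p.2 b) := by
    rw [coeff_mul, Finset.mul_sum]
    refine Finset.sum_congr rfl fun p hp => ?_
    rw [Finset.HasAntidiagonal.mem_antidiagonal] at hp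
    have h2 : p.1 i + p.2 i = m i + 1 := by
      have := congrArg (fun z : Fin n →₀ ℕ => z i) hp
      simpa [Finsupp.add_apply, hei] using this
    have h3 : (p.1 i : ℂ) + (p.2 i : ℂ) = (m i : ℂ) + 1 := by
      have := congrArg (Nat.cast : ℕ → ℂ) h2
      push_cast at this
      exact this
    rw [h3]
  have swap2 : ∀ (g : (Fin n →₀ ℕ) × (Fin n →₀ ℕ) → ℂ) (u : Fin n →₀ ℕ),
      ∑ p ∈ Finset.HasAntidiagonal.antidiagonal u, g p = ∑ p ∈ Finset.HasAntidiagonal.antidiagonal u, g (Prod.swap p) := by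
    intro g u
    refine Finset.sum_bij' (fun p _ => Prod.swap p) (fun p _ => Prod.swap p) ?_ ?_ ?_ ?_ ?_
    · intro p hp
      rw [Finset.HasAntidiagonal.mem_antidiagonal] at hp
      rw [Finset.HasAntidiagonal.mem_antidiagonal]
      show p.2 + p.1 = u
      rw [add_comm]; exact hp
    · intro p hp
      rw [Finset.HasAntidiagonal.mem_antidiagonal] at hp
      rw [Finset.HasAntidiagonal.mem_antidiagonal]
      show p.2 + p.1 = u
      rw [add_comm]; exact hp
    · intro p hp; exact Prod.swap_swap p
    · intro p hp; exact Prod.swap_swap p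
    · intro p hp; rfl
  have key2 : ∑ p ∈ Finset.HasAntidiagonal.antidiagonal m, coeff p.1 a * coeff p.2 (pd i b)
      = ∑ p ∈ Finset.HasAntidiagonal.antidiagonal (m + e), (p.2 i : ℂ) * (coeff p.1 a * coeff p.2 b) := by
    calc ∑ p ∈ Finset.HasAntidiagonal.antidiagonal m, coeff p.1 a * coeff p.2 (pd i b)
        = ∑ p ∈ Finset.HasAntidiagonal.antidiagonal m, coeff p.1 (pd i b) * coeff p.2 a := by
          rw [swap2 (fun p => coeff p.1 a * coeff p.2 (pd i b)) m]
          exact Finset.sum_congr rfl fun p _ => by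
            simp only [Prod.fst_swap, Prod.snd_swap]; ring
      _ = ∑ p ∈ Finset.HasAntidiagonal.antidiagonal (m + e), (p.1 i : ℂ) * (coeff p.1 b * coeff p.2 a) :=
          key b a
      _ = ∑ p ∈ Finset.HasAntidiagonal.antidiagonal (m + e), (p.2 i : ℂ) * (coeff p.1 a * coeff p.2 b) := by
          rw [swap2 (fun p => (p.1 i : ℂ) * (coeff p.1 b * coeff p.2 a)) (m + e)]
          exact Finset.sum_congr rfl fun p _ => by
            simp only [Prod.fst_swap, Prod.snd_swap]; ring
  rw [map_add, coeff_pd, keyL, coeff_mul, coeff_mul, key a b, key2, ← Finset.sum_add_distrib]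
  exact Finset.sum_congr rfl fun p hp => by ring

noncomputable def primitive (η : Fin n → MvPowerSeries (Fin n) ℂ) : MvPowerSeries (Fin n) ℂ :=
  fun m => if m = 0 then 0 else (deg m : ℂ)⁻¹ *
    ∑ i : Fin n, (if m i ≠ 0 then coeff (m - Finsupp.single i 1) (η i) else 0)

lemma coeff_primitive (η : Fin n → MvPowerSeries (Fin n) ℂ) (m : Fin n →₀ ℕ) :
    coeff m (primitive η) = if m = 0 then 0 else (deg m : ℂ)⁻¹ *
      ∑ i : Fin n, (if m i ≠ 0 then coeff (m - Finsupp.single i 1) (η i) else 0) := rfl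

lemma pd_primitive (η : Fin n → MvPowerSeries (Fin n) ℂ)
    (hc : ∀ i j : Fin n, pd i (η j) = pd j (η i)) (j : Fin n) :
    pd j (primitive η) = η j := by
  ext m
  set e := Finsupp.single j 1 with he
  have hme : m + e ≠ 0 := by
    intro h
    have := congrArg (fun z : Fin n →₀ ℕ => z j) h
    simp [he, Finsupp.add_apply] at this
  have hdeg : ((deg (m + e) : ℂ)) = (deg m : ℂ) + 1 := by
    rw [he, deg_add_single]; push_cast; ring
  set T : Fin n → ℂ := fun i =>
    if (m + e) i ≠ 0 then coeff (m + e - Finsupp.single i 1) (η i) else 0 with hT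
  have keyi : ∀ i : Fin n, ((m j : ℂ) + 1) * T i
      = (if i = j then ((m i : ℂ) + 1) else (m i : ℂ)) * coeff m (η j) := by
    intro i
    rcases eq_or_ne i j with rfl | hij
    · have h1 : (m + e) i ≠ 0 := by simp [he, Finsupp.add_apply]
      have h2 : m + e - Finsupp.single i 1 = m := by
        rw [← he]; exact add_tsub_cancel_right m e
      have hTi : T i = coeff m (η i) := by
        rw [hT]; dsimp only; rw [if_pos h1, h2]
      rw [hTi, if_pos rfl]
    · have h1 : ((m + e) : Fin n →₀ ℕ) i = m i := add_single_apply hij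
      rcases eq_or_ne (m i) 0 with h0 | h0
      · have hTi : T i = 0 := by
          rw [hT]; dsimp only; rw [if_neg (by simp [h1, h0])]
        rw [hTi, if_neg hij, h0]
        simp
      · have hTi : T i = coeff (m + e - Finsupp.single i 1) (η i) := by
          rw [hT]; simp only [h1, ne_eq, h0, not_false_eq_true, if_true]
        set m' := m - Finsupp.single i 1 with hm'
        have hcoeff := congrArg (coeff m') (hc i j)
        rw [coeff_pd, coeff_pd] at hcoeff
        have hm'i : m' i = m i - 1 := by simp [hm', Finsupp.tsub_apply]
        have hm'j : m' j = m j := sub_single_apply (Ne.symm hij)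
        have hm'add : m' + Finsupp.single i 1 = m := sub_add_single h0
        have hm'adde : m' + e = m + e - Finsupp.single i 1 := by
          rw [hm', tsub_add_eq_add_tsub (single_le_iff'.mpr h0)]
        have hcast : (m' i : ℂ) + 1 = (m i : ℂ) := by
          rw [hm'i]
          have : m i - 1 + 1 = m i := Nat.succ_pred_eq_of_pos (Nat.pos_of_ne_zero h0)
          exact_mod_cast congrArg (Nat.cast : ℕ → ℂ) this
        rw [hm'add, hm'adde, hm'j, hcast] at hcoeff
        rw [hTi, ← hcoeff, if_neg hij]
  have hsum : ((m j : ℂ) + 1) * ∑ i, T i = ((deg m : ℂ) + 1) * coeff m (η j) := by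
    rw [Finset.mul_sum, Finset.sum_congr rfl fun i _ => keyi i, ← Finset.sum_mul,
      sumWeights m j]
  have hne : ((deg m : ℂ) + 1) ≠ 0 := Nat.cast_add_one_ne_zero (deg m)
  rw [coeff_pd, ← he, coeff_primitive, if_neg hme, hdeg]
  rw [show (∑ i : Fin n, (if (m + e) i ≠ 0 then
      coeff (m + e - Finsupp.single i 1) (η i) else 0)) = ∑ i, T i from rfl]
  field_simp
  linear_combination hsum

noncomputable def vsol (θ : Fin n → MvPowerSeries (Fin n) ℂ) (m : Fin n →₀ ℕ) : ℂ :=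
  if m = 0 then 1 else
    -(deg m : ℂ)⁻¹ * ∑ i : Fin n,
      (if hi : m i ≠ 0 then
        ∑ pq ∈ (Finset.HasAntidiagonal.antidiagonal (m - Finsupp.single i 1)).attach,
          coeff pq.1.1 (θ i) * vsol θ pq.1.2
      else 0)
termination_by deg m
decreasing_by
  have hm := pq.2
  rw [Finset.HasAntidiagonal.mem_antidiagonal] at hm
  have hle : pq.1.2 ≤ m - Finsupp.single i 1 := le_of_le_of_eq le_add_self hm
  have h1 := deg_mono hle
  have h2 := deg_sub_single hi
  omega

noncomputable def vs (θ : Fin n → MvPowerSeries (Fin n) ℂ) : MvPowerSeries (Fin n) ℂ :=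
  vsol θ

lemma coeff_vs (θ : Fin n → MvPowerSeries (Fin n) ℂ) (m : Fin n →₀ ℕ) :
    coeff m (vs θ) = vsol θ m := rfl

lemma vs_zero (θ : Fin n → MvPowerSeries (Fin n) ℂ) : coeff 0 (vs θ) = 1 := by
  rw [coeff_vs, vsol.eq_1]
  simp

lemma vs_spec (θ : Fin n → MvPowerSeries (Fin n) ℂ) {m : Fin n →₀ ℕ} (hm : m ≠ 0) :
    coeff m (vs θ) = -(deg m : ℂ)⁻¹ * ∑ i : Fin n,
      (if m i ≠ 0 then coeff (m - Finsupp.single i 1) (θ i * vs θ) else 0) := by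
  rw [coeff_vs, vsol.eq_1, if_neg hm]
  congr 1
  refine Finset.sum_congr rfl fun i _ => ?_
  by_cases hi : m i ≠ 0
  · rw [dif_pos hi, if_pos hi, coeff_mul]
    exact Finset.sum_attach (Finset.HasAntidiagonal.antidiagonal (m - Finsupp.single i 1))
      (fun pq => coeff pq.1 (θ i) * coeff pq.2 (vs θ))
  · rw [dif_neg hi, if_neg hi]

lemma pd_vs (θ : Fin n → MvPowerSeries (Fin n) ℂ)
    (hc : ∀ i j : Fin n, pd i (θ j) = pd j (θ i)) (i : Fin n) :
    pd i (vs θ) = -(θ i * vs θ) := by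
  suffices key : ∀ d : ℕ, ∀ m : Fin n →₀ ℕ, deg m = d → ∀ i : Fin n,
      coeff m (pd i (vs θ)) = coeff m (-(θ i * vs θ)) by
    ext m; exact key (deg m) m rfl i
  intro d
  induction d using Nat.strong_induction_on with
  | _ d IH =>
    intro m hdm i
    set e := Finsupp.single i 1 with he
    have hme : m + e ≠ 0 := by
      intro h
      have := congrArg (fun z : Fin n →₀ ℕ => z i) h
      simp [he, Finsupp.add_apply] at this
    have hdege : deg (m + e) = deg m + 1 := by rw [he]; exact deg_add_single m i
    rw [map_neg, coeff_pd, ← he, vs_spec θ hme, hdege]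
    set T : Fin n → ℂ := fun j =>
      if (m + e) j ≠ 0 then coeff (m + e - Finsupp.single j 1) (θ j * vs θ) else 0 with hT
    have keyj : ∀ j : Fin n, ((m i : ℂ) + 1) * T j
        = (if j = i then ((m j : ℂ) + 1) else (m j : ℂ)) * coeff m (θ i * vs θ) := by
      intro j
      rcases eq_or_ne j i with rfl | hji
      · have h1 : (m + e) j ≠ 0 := by simp [he, Finsupp.add_apply]
        have h2 : m + e - Finsupp.single j 1 = m := by
          rw [← he]; exact add_tsub_cancel_right m e
        have hTj : T j = coeff m (θ j * vs θ) := by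
          rw [hT]; dsimp only; rw [if_pos h1, h2]
        rw [hTj, if_pos rfl]
      · have h1 : ((m + e) : Fin n →₀ ℕ) j = m j := add_single_apply hji
        rcases eq_or_ne (m j) 0 with h0 | h0
        · have hTj : T j = 0 := by
            rw [hT]; dsimp only; rw [if_neg (by simp [h1, h0])]
          rw [hTj, if_neg hji, h0]
          simp
        · have hTj : T j = coeff (m + e - Finsupp.single j 1) (θ j * vs θ) := by
            rw [hT]; dsimp only; rw [if_pos (by rw [h1]; exact h0)]
          set m' := m - Finsupp.single j 1 with hm'
          have hm'j : m' j = m j - 1 := by simp [hm', Finsupp.tsub_apply]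
          have hm'i : m' i = m i := sub_single_apply (Ne.symm hji)
          have hm'add : m' + Finsupp.single j 1 = m := sub_add_single h0
          have hm'adde : m' + e = m + e - Finsupp.single j 1 := by
            rw [hm', tsub_add_eq_add_tsub (single_le_iff'.mpr h0)]
          have hdm' : deg m' + 1 = deg m := deg_sub_single h0
          have hIH : ∀ (k : Fin n) (u : (Fin n →₀ ℕ) × (Fin n →₀ ℕ)),
              u ∈ Finset.HasAntidiagonal.antidiagonal m' →
              coeff u.2 (pd k (vs θ)) = coeff u.2 (-(θ k * vs θ)) := by
            intro k u hu
            rw [Finset.HasAntidiagonal.mem_antidiagonal] at hu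
            have hle : u.2 ≤ m' := le_of_le_of_eq le_add_self hu
            have hlt : deg u.2 < d := by
              have := deg_mono hle; omega
            exact IH (deg u.2) hlt u.2 rfl k
          have mixed : ∀ k l : Fin n,
              coeff m' (θ k * pd l (vs θ)) = -coeff m' (θ k * (θ l * vs θ)) := by
            intro k l
            rw [coeff_mul, coeff_mul, ← Finset.sum_neg_distrib]
            refine Finset.sum_congr rfl fun u hu => ?_
            rw [hIH l u hu, map_neg, mul_neg]
          have step : coeff m' (pd i (θ j * vs θ)) = coeff m' (pd j (θ i * vs θ)) := by
            rw [pd_mul, pd_mul, map_add, map_add, mixed j i, mixed i j, hc i j,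
              mul_left_comm (θ j) (θ i) (vs θ)]
          have lhs_eq : coeff m' (pd i (θ j * vs θ))
              = ((m i : ℂ) + 1) * coeff (m + e - Finsupp.single j 1) (θ j * vs θ) := by
            rw [coeff_pd, ← he, hm'i, hm'adde]
          have rhs_eq : coeff m' (pd j (θ i * vs θ))
              = (m j : ℂ) * coeff m (θ i * vs θ) := by
            rw [coeff_pd, hm'add, hm'j]
            have hcast : ((m j - 1 : ℕ) : ℂ) + 1 = (m j : ℂ) := by
              have h4 : m j - 1 + 1 = m j := Nat.succ_pred_eq_of_pos (Nat.pos_of_ne_zero h0)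
              exact_mod_cast congrArg (Nat.cast : ℕ → ℂ) h4
            rw [hcast]
          rw [hTj, if_neg hji, ← lhs_eq, step, rhs_eq]
    have hsum : ((m i : ℂ) + 1) * ∑ j, T j = ((deg m : ℂ) + 1) * coeff m (θ i * vs θ) := by
      rw [Finset.mul_sum, Finset.sum_congr rfl fun j _ => keyj j, ← Finset.sum_mul,
        sumWeights m i]
    have hne : ((deg m : ℂ) + 1) ≠ 0 := Nat.cast_add_one_ne_zero (deg m)
    have hcast2 : ((deg m + 1 : ℕ) : ℂ) = (deg m : ℂ) + 1 := by push_cast; ring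
    rw [hcast2]
    have : ((m i : ℂ) + 1) * (-((deg m : ℂ) + 1)⁻¹ * ∑ j, T j)
        = -(((deg m : ℂ) + 1)⁻¹ * (((m i : ℂ) + 1) * ∑ j, T j)) := by ring
    rw [this, hsum, ← mul_assoc, inv_mul_cancel₀ hne, one_mul]

end FIaux

/-- If `θ` is a closed holomorphic 1-form and `dω = θ ∧ ω`, then `ω` is a unit
multiple of an exact form `df`, so the foliation defined by `ω` admits a
holomorphic first integral. -/
theorem holomorphic_first_integral_of_closed_theta (n : ℕ) (hn : 1 ≤ n)
    (ω θ : Fin n → MvPowerSeries (Fin n) ℂ)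
    (hclosed : ∀ i j : Fin n, pd i (θ j) = pd j (θ i))
    (hdω : ∀ i j : Fin n, pd i (ω j) - pd j (ω i) = θ i * ω j - θ j * ω i) :
    ∃ (f u : MvPowerSeries (Fin n) ℂ), IsUnit u ∧ ∀ i : Fin n, ω i = u * pd i f := by
  classical
  set v := FIaux.vs θ with hv
  have hvu : IsUnit v := by
    rw [MvPowerSeries.isUnit_iff_constantCoeff]
    have h1 : constantCoeff v = 1 := by
      rw [← MvPowerSeries.coeff_zero_eq_constantCoeff_apply]
      exact FIaux.vs_zero θ
    rw [h1]
    exact isUnit_one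
  have hpdv : ∀ i, pd i v = -(θ i * v) := FIaux.pd_vs θ hclosed
  set η : Fin n → MvPowerSeries (Fin n) ℂ := fun i => v * ω i with hη
  have hηc : ∀ i j : Fin n, pd i (η j) = pd j (η i) := by
    intro i j
    have hkey : pd i (η j) - pd j (η i)
        = v * ((pd i (ω j) - pd j (ω i)) - (θ i * ω j - θ j * ω i)) := by
      rw [hη]
      dsimp only
      rw [FIaux.pd_mul, FIaux.pd_mul, hpdv i, hpdv j]
      ring
    rw [hdω i j, sub_self, mul_zero] at hkey
    exact sub_eq_zero.mp hkey
  set f := FIaux.primitive η with hf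
  have hpdf : ∀ i, pd i f = η i := fun i => FIaux.pd_primitive η hηc i
  obtain ⟨uu, huu⟩ := hvu
  refine ⟨f, ↑uu⁻¹, Units.isUnit _, fun i => ?_⟩
  rw [hpdf i, hη]
  dsimp only
  rw [← huu, ← mul_assoc, Units.inv_mul, one_mul]
end

section
/- Let n ≥ 1 and let ω ∈ Rₙⁿ be a nonzero integrable formal 1-form. Then there exists a meromorphic 1-form θ ∈ Kₙⁿ such that dω = θ ∧ ω; that is, for all i, j: ∂ᵢωⱼ − ∂ⱼωᵢ = θᵢ·ωⱼ − θⱼ·ωᵢ in Kₙ, identifying elements of Rₙ with their images in Kₙ. -/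
open MvPowerSeries

/-- For a nonzero integrable formal 1-form `ω` there exists a meromorphic 1-form `θ`
with `dω = θ ∧ ω`. -/
theorem exists_meromorphic_theta (n : ℕ) (hn : 1 ≤ n)
    (ω : Fin n → MvPowerSeries (Fin n) ℂ) (hω : ω ≠ 0) (hint : IntegrableN ω) :
    ∃ θ : Fin n → FractionRing (MvPowerSeries (Fin n) ℂ),
      ∀ i j : Fin n,
        algebraMap (MvPowerSeries (Fin n) ℂ) (FractionRing (MvPowerSeries (Fin n) ℂ))
            (pd i (ω j) - pd j (ω i))
          = θ i * algebraMap (MvPowerSeries (Fin n) ℂ)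
              (FractionRing (MvPowerSeries (Fin n) ℂ)) (ω j)
            - θ j * algebraMap (MvPowerSeries (Fin n) ℂ)
              (FractionRing (MvPowerSeries (Fin n) ℂ)) (ω i) := by
  have key : ∀ i j k : Fin n,
      ω i * (pd j (ω k) - pd k (ω j)) - ω j * (pd i (ω k) - pd k (ω i))
        + ω k * (pd i (ω j) - pd j (ω i)) = 0 := by
    intro i j k
    rcases lt_trichotomy i j with hij | hij | hij
    · rcases lt_trichotomy j k with hjk | hjk | hjk
      · exact hint i j k hij hjk
      · subst hjk; ring
      · rcases lt_trichotomy i k with hik | hik | hik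
        · first
          | linear_combination hint i k j hik hjk
          | linear_combination -hint i k j hik hjk
        · subst hik; ring
        · first
          | linear_combination hint k i j hik hij
          | linear_combination -hint k i j hik hij
    · subst hij; ring
    · rcases lt_trichotomy i k with hik | hik | hik
      · first
        | linear_combination hint j i k hij hik
        | linear_combination -hint j i k hij hik
      · subst hik; ring
      · rcases lt_trichotomy j k with hjk | hjk | hjk
        · first
          | linear_combination hint j k i hjk hik
          | linear_combination -hint j k i hjk hik
        · subst hjk; ring
        · first
          | linear_combination hint k j i hjk hij
          | linear_combination -hint k j i hjk hij
  obtain ⟨k₀, hk₀⟩ := Function.ne_iff.mp hω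
  set φ := algebraMap (MvPowerSeries (Fin n) ℂ) (FractionRing (MvPowerSeries (Fin n) ℂ))
  have hφ : Function.Injective φ := IsFractionRing.injective _ _
  have hc : φ (ω k₀) ≠ 0 := fun h => hk₀ (hφ (by simpa using h))
  refine ⟨fun i => φ (pd i (ω k₀) - pd k₀ (ω i)) / φ (ω k₀), fun i j => ?_⟩
  rw [div_mul_eq_mul_div, div_mul_eq_mul_div, div_sub_div_same, eq_div_iff hc,
    ← map_mul, ← map_mul, ← map_mul, ← map_sub]
  refine congrArg φ ?_
  first
  | linear_combination key i j k₀
  | linear_combination -key i j k₀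
end
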